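/- There exist four hyperimmune functions g_0, g_1, g_2, g_3 and two computable stable colorings f_0, f_1 : [ℕ]² → 2 such that for every infinite f_0-homogeneous set H_0 and every infinite f_1-homogeneous set H_1, at most one of the functions g_i is hyperimmune relative to H_0 ⊕ H_1. -/

import Mathlib

namespace Paper

/-- Codes for oracle Turing machines. -/
inductive OCode : Type
  | zero | succ | left | right | oracle
  | pair (a b : OCode) | comp (a b : OCode) | prec (a b : OCode) | rfind' (a : OCode)

/-- Evaluation of an oracle code with oracle `O`. -/
def oeval (O : ℕ → ℕ) : OCode → ℕ →. ℕ
  | .zero => pure 0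
  | .succ => Nat.succ
  | .left => ↑fun n : ℕ => n.unpair.1
  | .right => ↑fun n : ℕ => n.unpair.2
  | .oracle => ↑fun n : ℕ => O n
  | .pair cf cg => fun n => Nat.pair <$> oeval O cf n <*> oeval O cg n
  | .comp cf cg => fun n => oeval O cg n >>= oeval O cf
  | .prec cf cg =>
    Nat.unpaired fun a n =>
      n.rec (oeval O cf a) fun y IH => do
        let i ← IH
        oeval O cg (Nat.pair a (Nat.pair y i))
  | .rfind' cf =>
    Nat.unpaired fun a m =>
      (Nat.rfind fun n => (fun m => m = 0) <$> oeval O cf (Nat.pair a (n + m))).map (· + m)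

/-- A numbering of oracle codes. -/
def encodeOCode : OCode → ℕ
  | .zero => 0
  | .succ => 1
  | .left => 2
  | .right => 3
  | .oracle => 4
  | .pair a b => 4 * Nat.pair (encodeOCode a) (encodeOCode b) + 5
  | .comp a b => 4 * Nat.pair (encodeOCode a) (encodeOCode b) + 6
  | .prec a b => 4 * Nat.pair (encodeOCode a) (encodeOCode b) + 7
  | .rfind' a => 4 * encodeOCode a + 8

/-- The Turing jump of an oracle. -/
def jump (O : ℕ → ℕ) : Set ℕ :=
  { n | ∃ c : OCode, encodeOCode c = n.unpair.1 ∧ (oeval O c n.unpair.2).Dom }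

/-- `f` is (total) recursive in the oracle `O`. -/
def RecIn (O : ℕ → ℕ) (f : ℕ → ℕ) : Prop :=
  ∃ c : OCode, ∀ n, oeval O c n = Part.some (f n)

/-- The all-zero (trivial, computable) oracle. -/
def zeroO : ℕ → ℕ := fun _ => 0

/-- Characteristic function of a set of naturals. -/
noncomputable def chi (A : Set ℕ) : ℕ → ℕ := A.indicator fun _ => 1

/-- Turing join of two oracles. -/
def joinF (f g : ℕ → ℕ) : ℕ → ℕ := fun n => if n % 2 = 0 then f (n / 2) else g (n / 2)

/-- `A` is Σ⁰₁ relative to the oracle `O` (c.e. in `O`). -/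
def SigmaIn (O : ℕ → ℕ) (A : Set ℕ) : Prop :=
  ∃ c : OCode, ∀ n, n ∈ A ↔ (oeval O c n).Dom

/-- The halting problem `∅′`. -/
noncomputable def emptyJump : Set ℕ := jump zeroO

end Paper

namespace Paper

/-- `g` is hyperimmune relative to the oracle `O`: no `O`-computable function
dominates it. -/
def HypImm (O : ℕ → ℕ) (g : ℕ → ℕ) : Prop :=
  ∀ h : ℕ → ℕ, RecIn O h → ∃ n, h n < g n

open Nat.Partrec (Code)
open Nat.Partrec.Code

def ofCode : Code → OCode
  | Code.zero => .zero
  | Code.succ => .succ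
  | Code.left => .left
  | Code.right => .right
  | Code.pair a b => .pair (ofCode a) (ofCode b)
  | Code.comp a b => .comp (ofCode a) (ofCode b)
  | Code.prec a b => .prec (ofCode a) (ofCode b)
  | Code.rfind' a => .rfind' (ofCode a)

theorem oeval_ofCode (O : ℕ → ℕ) : ∀ c : Code, oeval O (ofCode c) = c.eval
  | Code.zero => rfl
  | Code.succ => rfl
  | Code.left => rfl
  | Code.right => rfl
  | Code.pair a b => by
      simp [ofCode, oeval, Nat.Partrec.Code.eval, oeval_ofCode O a, oeval_ofCode O b]
      rfl
  | Code.comp a b => by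
      simp [ofCode, oeval, Nat.Partrec.Code.eval, oeval_ofCode O a, oeval_ofCode O b]
      rfl
  | Code.prec a b => by
      simp [ofCode, oeval, Nat.Partrec.Code.eval, oeval_ofCode O a, oeval_ofCode O b]
      rfl
  | Code.rfind' a => by
      simp [ofCode, oeval, Nat.Partrec.Code.eval, oeval_ofCode O a]
      rfl

def toCode : OCode → Code
  | .zero => Code.zero
  | .succ => Code.succ
  | .left => Code.left
  | .right => Code.right
  | .oracle => Code.zero
  | .pair a b => Code.pair (toCode a) (toCode b)
  | .comp a b => Code.comp (toCode a) (toCode b)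
  | .prec a b => Code.prec (toCode a) (toCode b)
  | .rfind' a => Code.rfind' (toCode a)

theorem oeval_zeroO_toCode : ∀ c : OCode, oeval zeroO c = (toCode c).eval
  | .zero => rfl
  | .succ => rfl
  | .left => rfl
  | .right => rfl
  | .oracle => by
      funext n
      simp [oeval, toCode, Nat.Partrec.Code.eval, zeroO]
      rfl
  | .pair a b => by
      simp [toCode, oeval, Nat.Partrec.Code.eval, oeval_zeroO_toCode a, oeval_zeroO_toCode b]
      rfl
  | .comp a b => by
      simp [toCode, oeval, Nat.Partrec.Code.eval, oeval_zeroO_toCode a, oeval_zeroO_toCode b]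
      rfl
  | .prec a b => by
      simp [toCode, oeval, Nat.Partrec.Code.eval, oeval_zeroO_toCode a, oeval_zeroO_toCode b]
      rfl
  | .rfind' a => by
      simp [toCode, oeval, Nat.Partrec.Code.eval, oeval_zeroO_toCode a]
      rfl

theorem RecIn.ofComputable {O : ℕ → ℕ} {f : ℕ → ℕ} (hf : Computable f) : RecIn O f := by
  have h1 : Nat.Partrec (f : ℕ →. ℕ) := Partrec.nat_iff.1 hf.partrec
  obtain ⟨c, hc⟩ := Nat.Partrec.Code.exists_code.1 h1
  exact ⟨ofCode c, fun n => by rw [oeval_ofCode O c, hc]; rfl⟩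

theorem RecIn.oracle {O : ℕ → ℕ} : RecIn O O := ⟨.oracle, fun n => rfl⟩

theorem RecIn.comp {O : ℕ → ℕ} {f g : ℕ → ℕ} (hf : RecIn O f) (hg : RecIn O g) :
    RecIn O (fun n => f (g n)) := by
  obtain ⟨cf, hcf⟩ := hf; obtain ⟨cg, hcg⟩ := hg
  exact ⟨.comp cf cg, fun n => by simp [oeval, hcf, hcg]; exact (Part.bind_some (g n) (fun x => oeval O cf x)).trans (hcf (g n))⟩

theorem RecIn.pair {O : ℕ → ℕ} {f g : ℕ → ℕ} (hf : RecIn O f) (hg : RecIn O g) :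
    RecIn O (fun n => Nat.pair (f n) (g n)) := by
  obtain ⟨cf, hcf⟩ := hf; obtain ⟨cg, hcg⟩ := hg
  exact ⟨.pair cf cg, fun n => by simp [oeval, hcf, hcg, Seq.seq]⟩

theorem RecIn.prec {O : ℕ → ℕ} {f g : ℕ → ℕ} (hf : RecIn O f) (hg : RecIn O g) :
    RecIn O (fun n => Nat.rec (motive := fun _ => ℕ) (f n.unpair.1)
      (fun y IH => g (Nat.pair n.unpair.1 (Nat.pair y IH))) n.unpair.2) := by
  obtain ⟨cf, hcf⟩ := hf; obtain ⟨cg, hcg⟩ := hg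
  have key : ∀ a m, (Nat.rec (oeval O cf a)
      (fun y IH => do { let i ← IH; oeval O cg (Nat.pair a (Nat.pair y i)) }) m : Part ℕ)
      = Part.some (Nat.rec (motive := fun _ => ℕ) (f a)
          (fun y IH => g (Nat.pair a (Nat.pair y IH))) m) := by
    intro a m
    induction m with
    | zero => exact hcf a
    | succ m ih =>
      show (Nat.rec (oeval O cf a)
          (fun y IH => do { let i ← IH; oeval O cg (Nat.pair a (Nat.pair y i)) }) m
            : Part ℕ).bind (fun i => oeval O cg (Nat.pair a (Nat.pair m i)))
          = Part.some (g (Nat.pair a (Nat.pair m (Nat.rec (motive := fun _ => ℕ) (f a)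
              (fun y IH => g (Nat.pair a (Nat.pair y IH))) m))))
      rw [ih, Part.bind_some, hcg]
  exact ⟨.prec cf cg, fun n => by simpa only [oeval, Nat.unpaired] using key n.unpair.1 n.unpair.2⟩

theorem RecIn.rfind {O : ℕ → ℕ} {f : ℕ → ℕ} (hf : RecIn O f) (h : ℕ → ℕ)
    (hzero : ∀ n, f (Nat.pair n (h n)) = 0)
    (hmin : ∀ n m, m < h n → f (Nat.pair n m) ≠ 0) : RecIn O h := by
  obtain ⟨cf, hcf⟩ := hf
  refine ⟨.comp (.rfind' cf) (.pair (.pair .left .right) .zero), fun n => ?_⟩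
  have hid : oeval O (.pair (.pair OCode.left OCode.right) .zero) n
      = Part.some (Nat.pair n 0) := by
    have hn : Nat.pair n.unpair.1 n.unpair.2 = n := Nat.pair_unpair n
    simp [oeval, Seq.seq, hn]
    try rfl
  have hcomp : oeval O (.comp (.rfind' cf) (.pair (.pair .left .right) .zero)) n
      = oeval O (.pair (.pair .left .right) .zero) n >>= oeval O (.rfind' cf) := rfl
  rw [hcomp, hid]
  show (Part.some (Nat.pair n 0)).bind (fun x => oeval O (.rfind' cf) x) = Part.some (h n)
  rw [Part.bind_some]
  rw [Part.eq_some_iff]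
  simp only [oeval, Nat.unpaired, Nat.unpair_pair, Part.mem_map_iff]
  refine ⟨h n, ?_, by omega⟩
  apply Nat.mem_rfind.2
  constructor
  · simp [hcf, hzero n]
  · intro m hm
    simp only [hcf, Part.map_some, Part.mem_some_iff]
    simpa using hmin n m hm

open scoped Classical

theorem RecIn.of_eq {O f : ℕ → ℕ} {g : ℕ → ℕ} (hf : RecIn O f) (h : ∀ n, f n = g n) :
    RecIn O g := by
  obtain ⟨c, hc⟩ := hf
  exact ⟨c, fun n => by rw [hc n, h n]⟩

/-- Oracle-relative counting of nonzero values of `j ↦ O (2*j+b)`. -/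
def cntO (O : ℕ → ℕ) (b : ℕ) : ℕ → ℕ
  | 0 => 0
  | m+1 => cntO O b m + min (O (2*m + b)) 1

theorem recIn_cntO (O : ℕ → ℕ) (b : ℕ) : RecIn O (cntO O b) := by
  have h1 : RecIn O (fun t : ℕ => t.unpair.2.unpair.2) :=
    .ofComputable ((Primrec.snd.comp (Primrec.unpair.comp
      (Primrec.snd.comp Primrec.unpair))).to_comp)
  have ha : RecIn O (fun t : ℕ => 2*t.unpair.2.unpair.1 + b) :=
    .ofComputable (((Primrec.nat_add.comp
      (Primrec.nat_mul.comp (Primrec.const 2)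
        (Primrec.fst.comp (Primrec.unpair.comp (Primrec.snd.comp Primrec.unpair))))
      (Primrec.const b))).to_comp)
  have hmin1 : RecIn O (fun z : ℕ => min z 1) :=
    .ofComputable ((Primrec.nat_min.comp Primrec.id (Primrec.const 1)).to_comp)
  have h2 : RecIn O (fun t : ℕ => min (O (2*t.unpair.2.unpair.1 + b)) 1) :=
    RecIn.comp hmin1 (RecIn.comp RecIn.oracle ha)
  have hadd : RecIn O (fun p : ℕ => p.unpair.1 + p.unpair.2) :=
    .ofComputable ((Primrec.nat_add.comp
      (Primrec.fst.comp Primrec.unpair) (Primrec.snd.comp Primrec.unpair)).to_comp)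
  have hg : RecIn O (fun t : ℕ =>
      t.unpair.2.unpair.2 + min (O (2*t.unpair.2.unpair.1 + b)) 1) := by
    have := RecIn.comp hadd (RecIn.pair h1 h2)
    exact this.of_eq (fun t => by simp)
  have hF := RecIn.prec (RecIn.ofComputable (Computable.const 0) (O := O)) hg
  have hp0 : RecIn O (fun m : ℕ => Nat.pair 0 m) :=
    .ofComputable ((Primrec₂.natPair.comp (Primrec.const 0) Primrec.id).to_comp)
  have := RecIn.comp hF hp0
  apply this.of_eq
  intro m
  simp only [Nat.unpair_pair]
  induction m with
  | zero => rfl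
  | succ m ih =>
    show (Nat.rec (motive := fun _ => ℕ) 0 (fun y IH => IH + min (O (2*y + b)) 1) m)
        + min (O (2*m + b)) 1 = cntO O b (m+1)
    rw [ih]
    rfl

theorem cntO_eq_count (O : ℕ → ℕ) (b : ℕ) :
    ∀ m, cntO O b m = Nat.count (fun j => O (2*j + b) ≠ 0) m := by
  intro m
  induction m with
  | zero => rfl
  | succ m ih =>
    by_cases h : O (2*m + b) = 0
    · simp [cntO, Nat.count_succ, ← ih, h]
    · simp only [cntO, Nat.count_succ, ← ih]
      simp [h]
      omega

theorem recIn_nth (O : ℕ → ℕ) (b : ℕ) (hinf : {j | O (2*j + b) ≠ 0}.Infinite) :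
    RecIn O (fun n => Nat.nth (fun j => O (2*j + b) ≠ 0) n) := by
  set p := fun j => O (2*j + b) ≠ 0 with hp
  have hr : RecIn O (fun t : ℕ =>
      if t.unpair.1 + 1 ≤ cntO O b (t.unpair.2 + 1) then 0 else 1) := by
    have hlhs : RecIn O (fun t : ℕ => t.unpair.1 + 1) :=
      .ofComputable ((Primrec.succ.comp (Primrec.fst.comp Primrec.unpair)).to_comp)
    have hrhs : RecIn O (fun t : ℕ => cntO O b (t.unpair.2 + 1)) :=
      RecIn.comp (recIn_cntO O b)
        (.ofComputable ((Primrec.succ.comp (Primrec.snd.comp Primrec.unpair)).to_comp))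
    have htest : RecIn O (fun q : ℕ => if q.unpair.1 ≤ q.unpair.2 then 0 else 1) :=
      .ofComputable ((Primrec.ite
        (Primrec.nat_le.comp (Primrec.fst.comp Primrec.unpair)
          (Primrec.snd.comp Primrec.unpair)) (Primrec.const 0) (Primrec.const 1)).to_comp)
    have := RecIn.comp htest (RecIn.pair hlhs hrhs)
    exact this.of_eq (fun t => by simp)
  apply RecIn.rfind hr
  · intro n
    simp only [Nat.unpair_pair]
    rw [cntO_eq_count, Nat.count_nth_succ_of_infinite hinf]
    simp
  · intro n m hm
    simp only [Nat.unpair_pair]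
    rw [cntO_eq_count]
    have h1 : m + 1 ≤ Nat.nth p n := hm
    have h2 : Nat.count p (m+1) ≤ Nat.count p (Nat.nth p n) := Nat.count_monotone p h1
    rw [Nat.count_nth_of_infinite hinf] at h2
    have : ¬ (n + 1 ≤ Nat.count p (m+1)) := by omega
    simp [this]
    exact h2

open scoped Classical
open Nat.Partrec (Code)
open Nat.Partrec.Code

theorem le_foldr_max (f : ℕ → ℕ) : ∀ (l : List ℕ) {a : ℕ}, a ∈ l →
    f a ≤ (l.map f).foldr max 0
  | b :: l, a, h => by
    rcases List.mem_cons.1 h with rfl | h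
    · exact le_max_left _ _
    · exact le_trans (le_foldr_max f l h) (le_max_right _ _)

theorem foldr_max_le (f : ℕ → ℕ) : ∀ (l : List ℕ) {B : ℕ}, (∀ a ∈ l, f a ≤ B) →
    (l.map f).foldr max 0 ≤ B
  | [], B, _ => Nat.zero_le B
  | b :: l, B, h => by
    simp only [List.map_cons, List.foldr_cons]
    exact max_le (h b List.mem_cons_self)
      (foldr_max_le f l fun a ha => h a (List.mem_cons_of_mem b ha))

/-- Stage-`s` approximation to the dominating function. -/
def hstep (s n : ℕ) : ℕ :=
  ((List.range (n+1)).map fun e =>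
    ((Nat.Partrec.Code.evaln s (Denumerable.ofNat Nat.Partrec.Code e) n).getD 0) + 1).foldr max 0

theorem hstep_mono {s s' : ℕ} (h : s ≤ s') (n : ℕ) : hstep s n ≤ hstep s' n := by
  apply foldr_max_le
  intro e he
  refine le_trans ?_ (le_foldr_max _ _ he)
  rcases he' : Nat.Partrec.Code.evaln s (Denumerable.ofNat Nat.Partrec.Code e) n with _ | x
  · simp
  · have h2 : x ∈ Nat.Partrec.Code.evaln s' (Denumerable.ofNat Nat.Partrec.Code e) n :=
      evaln_mono h (by rw [Option.mem_def, he'])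
    rw [Option.mem_def] at h2
    rw [h2]

noncomputable def hbnd (n : ℕ) : ℕ :=
  ((List.range (n+1)).map fun e =>
    if h : ((Denumerable.ofNat Nat.Partrec.Code e).eval n).Dom then
      (((Denumerable.ofNat Nat.Partrec.Code e).eval n).get h) + 1
    else 1).foldr max 0

theorem hstep_le_hbnd (s n : ℕ) : hstep s n ≤ hbnd n := by
  apply foldr_max_le
  intro e he
  refine le_trans ?_ (le_foldr_max _ _ he)
  rcases he' : Nat.Partrec.Code.evaln s (Denumerable.ofNat Nat.Partrec.Code e) n with _ | x
  · simp only [Option.getD_none]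
    split <;> omega
  · have hx : x ∈ (Denumerable.ofNat Nat.Partrec.Code e).eval n :=
      evaln_sound (x := x) (by rw [Option.mem_def, he'])
    have hdom : ((Denumerable.ofNat Nat.Partrec.Code e).eval n).Dom := Part.dom_iff_mem.2 ⟨x, hx⟩
    rw [dif_pos hdom, Part.get_eq_of_mem hx hdom]
    simp

theorem stab {f : ℕ → ℕ} (hm : Monotone f) {B : ℕ} (hb : ∀ s, f s ≤ B) :
    ∃ s0, ∀ s ≥ s0, f s = f s0 := by
  have hne : (Set.range f).Nonempty := ⟨f 0, 0, rfl⟩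
  have hbdd : BddAbove (Set.range f) := ⟨B, by rintro x ⟨s, rfl⟩; exact hb s⟩
  obtain ⟨s0, hs0⟩ := Nat.sSup_mem hne hbdd
  refine ⟨s0, fun s hs => le_antisymm ?_ (hm hs)⟩
  rw [hs0]
  exact le_csSup hbdd ⟨s, rfl⟩

theorem hstepConv (n : ℕ) : ∃ s0, ∀ s ≥ s0, hstep s n = hstep s0 n :=
  stab (fun _ _ h => hstep_mono h n) (fun s => hstep_le_hbnd s n)

noncomputable def hS (n : ℕ) : ℕ := (hstepConv n).choose

noncomputable def hlim (n : ℕ) : ℕ := hstep (hS n) n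

theorem hstep_eq_hlim {n s : ℕ} (h : hS n ≤ s) : hstep s n = hlim n :=
  (hstepConv n).choose_spec s h

theorem hlim_dom {c : Code} {n v : ℕ} (hc : c.eval n = Part.some v)
    (hen : Encodable.encode c ≤ n) : v < hlim n := by
  have hv : v ∈ c.eval n := by rw [hc]; exact Part.mem_some v
  obtain ⟨k, hk⟩ := evaln_complete.1 hv
  set s := max k (hS n) with hs
  have hk' : v ∈ evaln s c n := evaln_mono (le_max_left _ _) hk
  have hterm : v + 1 ≤ hstep s n := by
    have hmem : Encodable.encode c ∈ List.range (n+1) := List.mem_range.2 (by omega)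
    have h3 := le_foldr_max
      (fun e => ((Nat.Partrec.Code.evaln s (Denumerable.ofNat Nat.Partrec.Code e) n).getD 0) + 1)
      (List.range (n+1)) hmem
    simp only [Denumerable.ofNat_encode] at h3
    rw [Option.mem_def] at hk'
    rw [hk'] at h3
    simpa [hstep] using h3
  have h4 : hstep s n = hlim n := hstep_eq_hlim (by rw [hs]; exact le_max_right _ _)
  omega

/-- Stage-`s` block boundaries. -/
def blks (s : ℕ) : ℕ → ℕ
  | 0 => 0
  | k+1 => blks s k + hstep s (blks s k) + 1

/-- Limit block boundaries. -/
noncomputable def Blim : ℕ → ℕ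
  | 0 => 0
  | k+1 => Blim k + hlim (Blim k) + 1

theorem blks_conv : ∀ k, ∃ s0, ∀ s ≥ s0, blks s k = Blim k
  | 0 => ⟨0, fun _ _ => rfl⟩
  | k+1 => by
    obtain ⟨s0, hs0⟩ := blks_conv k
    refine ⟨max s0 (hS (Blim k)), fun s hs => ?_⟩
    show blks s k + hstep s (blks s k) + 1 = Blim k + hlim (Blim k) + 1
    rw [hs0 s (le_trans (le_max_left _ _) hs), hstep_eq_hlim (le_trans (le_max_right _ _) hs)]

theorem blks_ge (s : ℕ) : ∀ k, k ≤ blks s k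
  | 0 => le_refl 0
  | k+1 => by
    have := blks_ge s k
    show k+1 ≤ blks s k + hstep s (blks s k) + 1
    omega

theorem Blim_ge : ∀ k, k ≤ Blim k
  | 0 => le_refl 0
  | k+1 => by
    have := Blim_ge k
    show k+1 ≤ Blim k + hlim (Blim k) + 1
    omega

theorem Blim_lt_succ (k : ℕ) : Blim k < Blim (k+1) := by
  show Blim k < Blim k + hlim (Blim k) + 1
  omega

theorem Blim_strictMono : StrictMono Blim := strictMono_nat_of_lt_succ Blim_lt_succ

theorem blks_conv_all : ∀ K, ∃ s0, ∀ s ≥ s0, ∀ k ≤ K, blks s k = Blim k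
  | 0 => by
    obtain ⟨s0, hs0⟩ := blks_conv 0
    exact ⟨s0, fun s hs k hk => by rw [Nat.le_zero.1 hk]; exact hs0 s hs⟩
  | K+1 => by
    obtain ⟨s0, hs0⟩ := blks_conv_all K
    obtain ⟨s1, hs1⟩ := blks_conv (K+1)
    refine ⟨max s0 s1, fun s hs k hk => ?_⟩
    rcases Nat.lt_or_ge k (K+1) with h | h
    · exact hs0 s (le_trans (le_max_left _ _) hs) k (by omega)
    · have : k = K+1 := by omega
      rw [this]; exact hs1 s (le_trans (le_max_right _ _) hs)

theorem findGreatest_congr {P Q : ℕ → Prop} [DecidablePred P] [DecidablePred Q] {b : ℕ}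
    (h : ∀ k ≤ b, (P k ↔ Q k)) : Nat.findGreatest P b = Nat.findGreatest Q b := by
  induction b with
  | zero => rfl
  | succ b ih =>
    rw [Nat.findGreatest_succ, Nat.findGreatest_succ]
    by_cases hq : Q (b+1)
    · rw [if_pos ((h (b+1) (le_refl _)).2 hq), if_pos hq]
    · rw [if_neg (fun hp => hq ((h (b+1) (le_refl _)).1 hp)), if_neg hq]
      exact ih fun k hk => h k (by omega)

/-- Stage-`s` block index of `x`. -/
def blkIdx (s x : ℕ) : ℕ := Nat.findGreatest (fun k => blks s k ≤ x) x

/-- Limit block index of `x`. -/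
noncomputable def BIdx (x : ℕ) : ℕ := Nat.findGreatest (fun k => Blim k ≤ x) x

theorem idx_spec (g : ℕ → ℕ) (h0 : g 0 = 0) (hge : ∀ k, k ≤ g k) (x : ℕ) :
    g (Nat.findGreatest (fun k => g k ≤ x) x) ≤ x ∧
      x < g (Nat.findGreatest (fun k => g k ≤ x) x + 1) := by
  set I := Nat.findGreatest (fun k => g k ≤ x) x with hI
  constructor
  · exact Nat.findGreatest_spec (P := fun k => g k ≤ x) (m := 0) (Nat.zero_le x)
      (show g 0 ≤ x by rw [h0]; exact Nat.zero_le x)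
  · have hIx : I ≤ x := Nat.findGreatest_le x
    rcases Nat.lt_or_ge I x with h | h
    · have := Nat.findGreatest_is_greatest (show I < I + 1 by omega) (by omega : I + 1 ≤ x)
      omega
    · have hIeq : I = x := by omega
      have := hge (I + 1)
      omega

theorem idx_unique {g : ℕ → ℕ} (hs : StrictMono g) {x i j : ℕ}
    (h1 : g i ≤ x) (h2 : x < g (i+1)) (h1' : g j ≤ x) (h2' : x < g (j+1)) : i = j := by
  rcases lt_trichotomy i j with h | h | h
  · have := hs.monotone (show i + 1 ≤ j by omega); omega
  · exact h
  · have := hs.monotone (show j + 1 ≤ i by omega); omega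

theorem BIdx_spec (x : ℕ) : Blim (BIdx x) ≤ x ∧ x < Blim (BIdx x + 1) :=
  idx_spec Blim rfl Blim_ge x

theorem BIdx_eq_of_mem {k x : ℕ} (h1 : Blim k ≤ x) (h2 : x < Blim (k+1)) : BIdx x = k :=
  idx_unique Blim_strictMono (BIdx_spec x).1 (BIdx_spec x).2 h1 h2

theorem blkIdx_conv (x : ℕ) : ∃ s0, ∀ s ≥ s0, blkIdx s x = BIdx x := by
  obtain ⟨s0, hs0⟩ := blks_conv_all (x+1)
  refine ⟨s0, fun s hs => ?_⟩
  exact findGreatest_congr fun k hk => by rw [hs0 s hs k (by omega)]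

open scoped Classical
open Nat.Partrec (Code)
open Nat.Partrec.Code

/-- First stable coloring. -/
def fcol0 : ℕ → ℕ → Fin 2 := fun x y => if blkIdx y x % 4 ≤ 1 then 0 else 1

/-- Second stable coloring. -/
def fcol1 : ℕ → ℕ → Fin 2 := fun x y => if blkIdx y x % 2 = 0 then 0 else 1

/-- The four hyperimmune functions. -/
noncomputable def gfun (i : Fin 4) : ℕ → ℕ :=
  fun n => Nat.nth (fun x => BIdx x % 4 ≠ i.val) n

theorem hstep_primrec : Primrec fun p : ℕ × ℕ => hstep p.1 p.2 := by
  have hmap : Primrec fun p : ℕ × ℕ => (List.range (p.2+1)).map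
      (fun e => ((Nat.Partrec.Code.evaln p.1 (Denumerable.ofNat Nat.Partrec.Code e) p.2).getD 0)
        + 1) := by
    apply Primrec.list_map (Primrec.list_range.comp (Primrec.succ.comp Primrec.snd))
    show Primrec fun q : (ℕ × ℕ) × ℕ =>
      ((Nat.Partrec.Code.evaln q.1.1 (Denumerable.ofNat Nat.Partrec.Code q.2) q.1.2).getD 0) + 1
    exact Primrec.succ.comp (Primrec.option_getD.comp
      (Nat.Partrec.Code.primrec_evaln.comp (Primrec.pair
        (Primrec.pair (Primrec.fst.comp Primrec.fst) ((Primrec.ofNat Code).comp Primrec.snd))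
        (Primrec.snd.comp Primrec.fst))) (Primrec.const 0))
  exact Primrec.list_foldr hmap (Primrec.const 0)
    (Primrec.to₂ (Primrec.nat_max.comp (Primrec.fst.comp Primrec.snd)
      (Primrec.snd.comp Primrec.snd)))

theorem blks_eq_rec (s m : ℕ) : blks s m
    = Nat.rec (motive := fun _ => ℕ) 0 (fun _ IH => IH + hstep s IH + 1) m := by
  induction m with
  | zero => rfl
  | succ m ih =>
    show blks s m + hstep s (blks s m) + 1
      = (Nat.rec (motive := fun _ => ℕ) 0 (fun _ IH => IH + hstep s IH + 1) m)
        + hstep s (Nat.rec (motive := fun _ => ℕ) 0 (fun _ IH => IH + hstep s IH + 1) m) + 1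
    rw [ih]

theorem blks_primrec : Primrec fun p : ℕ × ℕ => blks p.1 p.2 := by
  have h := Primrec.nat_rec' (f := fun p : ℕ × ℕ => p.2) (g := fun _ : ℕ × ℕ => (0 : ℕ))
    (h := fun (p : ℕ × ℕ) (q : ℕ × ℕ) => q.2 + hstep p.1 q.2 + 1)
    Primrec.snd (Primrec.const 0)
    (Primrec.to₂ (Primrec.succ.comp (Primrec.nat_add.comp
      (Primrec.snd.comp Primrec.snd)
      (hstep_primrec.comp (Primrec.pair (Primrec.fst.comp Primrec.fst)
        (Primrec.snd.comp Primrec.snd))))))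
  apply h.of_eq
  rintro ⟨s, m⟩
  exact (blks_eq_rec s m).symm

theorem blkIdx_primrec : Primrec fun p : ℕ × ℕ => blkIdx p.1 p.2 := by
  apply Primrec.nat_findGreatest (f := fun p : ℕ × ℕ => p.2)
    (p := fun (p : ℕ × ℕ) (k : ℕ) => blks p.1 k ≤ p.2) Primrec.snd
  exact Primrec.nat_le.comp₂
    ((blks_primrec.comp (Primrec.pair (Primrec.fst.comp Primrec.fst) Primrec.snd)).to₂)
    ((Primrec.snd.comp Primrec.fst).to₂)

theorem recIn_fcol0 : RecIn zeroO (fun m => ((fcol0 m.unpair.1 m.unpair.2 : Fin 2) : ℕ)) := by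
  have hb : Primrec fun m : ℕ =>
      (if blkIdx m.unpair.2 m.unpair.1 % 4 ≤ 1 then 0 else (1:ℕ)) := by
    apply Primrec.ite ?_ (Primrec.const 0) (Primrec.const 1)
    exact Primrec.nat_le.comp (Primrec.nat_mod.comp
      (blkIdx_primrec.comp (Primrec.pair (Primrec.snd.comp Primrec.unpair)
        (Primrec.fst.comp Primrec.unpair))) (Primrec.const 4)) (Primrec.const 1)
  apply (RecIn.ofComputable (O := zeroO) hb.to_comp).of_eq
  intro m
  simp [fcol0, apply_ite (Fin.val : Fin 2 → ℕ)]

theorem recIn_fcol1 : RecIn zeroO (fun m => ((fcol1 m.unpair.1 m.unpair.2 : Fin 2) : ℕ)) := by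
  have hb : Primrec fun m : ℕ =>
      (if blkIdx m.unpair.2 m.unpair.1 % 2 = 0 then 0 else (1:ℕ)) := by
    apply Primrec.ite ?_ (Primrec.const 0) (Primrec.const 1)
    exact Primrec.eq.comp (Primrec.nat_mod.comp
      (blkIdx_primrec.comp (Primrec.pair (Primrec.snd.comp Primrec.unpair)
        (Primrec.fst.comp Primrec.unpair))) (Primrec.const 2)) (Primrec.const 0)
  apply (RecIn.ofComputable (O := zeroO) hb.to_comp).of_eq
  intro m
  simp [fcol1, apply_ite (Fin.val : Fin 2 → ℕ)]

theorem Ci_infinite (v : ℕ) (hv : v < 4) : {x : ℕ | BIdx x % 4 ≠ v}.Infinite := by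
  apply Set.infinite_of_injective_forall_mem
    (f := fun m : ℕ => Blim (4*m + (v+1) % 4))
  · intro a b hab
    have := Blim_strictMono.injective hab
    omega
  · intro m
    have h1 : BIdx (Blim (4*m + (v+1) % 4)) = 4*m + (v+1) % 4 :=
      BIdx_eq_of_mem (le_refl _) (Blim_lt_succ _)
    simp only [Set.mem_setOf_eq, h1]
    omega

theorem count_block_le {k v : ℕ} (hkv : k % 4 = v) :
    Nat.count (fun x => BIdx x % 4 ≠ v) (Blim (k+1)) ≤ Blim k := by
  rw [Nat.count_eq_card_filter_range]
  have hsub : {x ∈ Finset.range (Blim (k+1)) | BIdx x % 4 ≠ v} ⊆ Finset.range (Blim k) := by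
    intro x hx
    simp only [Finset.mem_filter, Finset.mem_range] at hx ⊢
    rcases Nat.lt_or_ge x (Blim k) with h | h
    · exact h
    · exact absurd (by rw [BIdx_eq_of_mem h hx.1]; exact hkv) hx.2
  calc ({x ∈ Finset.range (Blim (k+1)) | BIdx x % 4 ≠ v}).card
        ≤ (Finset.range (Blim k)).card := Finset.card_le_card hsub
    _ = Blim k := Finset.card_range _

theorem nth_block_ge {k : ℕ} (i : Fin 4) (hk : k % 4 = i.val) :
    Blim (k+1) ≤ Nat.nth (fun x => BIdx x % 4 ≠ i.val) (Blim k) :=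
  (Nat.count_le_iff_le_nth (Ci_infinite i.val i.isLt)).1 (count_block_le hk)

theorem nth_mono_pred {p q : ℕ → Prop} (hpq : ∀ x, p x → q x) (hp : (setOf p).Infinite)
    (n : ℕ) : Nat.nth q n ≤ Nat.nth p n := by
  have hq : (setOf q).Infinite := hp.mono hpq
  have h1 : n < Nat.count q (Nat.nth p n + 1) := by
    have h2 := Nat.count_nth_succ_of_infinite hp n
    have h3 := Nat.count_mono_left (p := p) (q := q) (n := Nat.nth p n + 1) (fun k _ => hpq k)
    omega
  have := (Nat.lt_nth_iff_count_lt hq).1 h1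
  omega

theorem not_hypImm_of_dominated {O g h : ℕ → ℕ} (hh : RecIn O h) (hd : ∀ n, g n ≤ h n) :
    ¬ HypImm O g := by
  intro hyp
  obtain ⟨n, hn⟩ := hyp h hh
  have := hd n
  omega

/-- The principal function of `H0` is computable in the join oracle. -/
theorem recIn_nthH0 (H0 H1 : Set ℕ) (h0 : H0.Infinite) :
    RecIn (joinF (chi H0) (chi H1)) (fun n => Nat.nth (· ∈ H0) n) := by
  set O := joinF (chi H0) (chi H1) with hO
  have hval : ∀ j, O (2*j + 0) = chi H0 j := by
    intro j
    show joinF (chi H0) (chi H1) (2*j+0) = chi H0 j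
    unfold joinF
    rw [if_pos (by omega)]
    congr 1
    omega
  have hPQ : (fun j => O (2*j + 0) ≠ 0) = (· ∈ H0) := by
    funext j
    rw [hval j]
    simp [chi, Set.indicator_apply]
  have hinf : {j | O (2*j + 0) ≠ 0}.Infinite := by
    have hset : {j | O (2*j + 0) ≠ 0} = H0 := Eq.trans (congrArg setOf hPQ) rfl
    rw [hset]; exact h0
  exact (recIn_nth O 0 hinf).of_eq fun n => by rw [hPQ]

theorem recIn_nthH1 (H0 H1 : Set ℕ) (h1 : H1.Infinite) :
    RecIn (joinF (chi H0) (chi H1)) (fun n => Nat.nth (· ∈ H1) n) := by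
  set O := joinF (chi H0) (chi H1) with hO
  have hval : ∀ j, O (2*j + 1) = chi H1 j := by
    intro j
    show joinF (chi H0) (chi H1) (2*j+1) = chi H1 j
    unfold joinF
    rw [if_neg (by omega)]
    congr 1
    omega
  have hPQ : (fun j => O (2*j + 1) ≠ 0) = (· ∈ H1) := by
    funext j
    rw [hval j]
    simp [chi, Set.indicator_apply]
  have hinf : {j | O (2*j + 1) ≠ 0}.Infinite := by
    have hset : {j | O (2*j + 1) ≠ 0} = H1 := Eq.trans (congrArg setOf hPQ) rfl
    rw [hset]; exact h1
  exact (recIn_nth O 1 hinf).of_eq fun n => by rw [hPQ]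

/-- If an infinite set `H` avoids the `v`-th part, then `gfun v` is not hyperimmune
relative to any oracle computing the principal function of `H`. -/
theorem kill {O : ℕ → ℕ} {H : Set ℕ} (hH : H.Infinite) (v : Fin 4)
    (hsub : ∀ x ∈ H, BIdx x % 4 ≠ v.val)
    (hrec : RecIn O (fun n => Nat.nth (· ∈ H) n)) : ¬ HypImm O (gfun v) := by
  apply not_hypImm_of_dominated hrec
  intro n
  exact nth_mono_pred hsub hH n

theorem fcol0_limit (x : ℕ) : ∃ s0, ∀ y ≥ s0,
    fcol0 x y = (if BIdx x % 4 ≤ 1 then (0 : Fin 2) else 1) := by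
  obtain ⟨s0, hs0⟩ := blkIdx_conv x
  exact ⟨s0, fun y hy => by rw [fcol0, hs0 y hy]⟩

theorem fcol1_limit (x : ℕ) : ∃ s0, ∀ y ≥ s0,
    fcol1 x y = (if BIdx x % 2 = 0 then (0 : Fin 2) else 1) := by
  obtain ⟨s0, hs0⟩ := blkIdx_conv x
  exact ⟨s0, fun y hy => by rw [fcol1, hs0 y hy]⟩

theorem limit_of_hom {H : Set ℕ} (hH : H.Infinite) {f : ℕ → ℕ → Fin 2} {L : ℕ → Fin 2}
    (hlim : ∀ x, ∃ s0, ∀ y ≥ s0, f x y = L x) {c : Fin 2}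
    (hc : ∀ x ∈ H, ∀ y ∈ H, x < y → f x y = c) : ∀ x ∈ H, L x = c := by
  intro x hx
  obtain ⟨s0, hs0⟩ := hlim x
  obtain ⟨y, hyH, hy⟩ := hH.exists_gt (max x s0)
  rw [← hc x hx y hyH (by omega), hs0 y (by omega)]

/-- There are four hyperimmune functions `g₀, …, g₃` and two computable stable colorings
`f₀, f₁ : [ℕ]² → 2` such that for all infinite homogeneous sets `H₀` for `f₀` and `H₁`
for `f₁`, at most one `gᵢ` is hyperimmune relative to `H₀ ⊕ H₁`. -/
theorem product_hyperimmunity_failure :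
    ∃ g : Fin 4 → ℕ → ℕ, ∃ f0 f1 : ℕ → ℕ → Fin 2,
      (∀ i : Fin 4, HypImm zeroO (g i)) ∧
      RecIn zeroO (fun m => (f0 m.unpair.1 m.unpair.2 : ℕ)) ∧
      RecIn zeroO (fun m => (f1 m.unpair.1 m.unpair.2 : ℕ)) ∧
      (∀ x : ℕ, ∃ c : Fin 2, ∀ᶠ y in Filter.atTop, f0 x y = c) ∧
      (∀ x : ℕ, ∃ c : Fin 2, ∀ᶠ y in Filter.atTop, f1 x y = c) ∧
      ∀ H0 H1 : Set ℕ, H0.Infinite → H1.Infinite →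
        (∃ c : Fin 2, ∀ x ∈ H0, ∀ y ∈ H0, x < y → f0 x y = c) →
        (∃ c : Fin 2, ∀ x ∈ H1, ∀ y ∈ H1, x < y → f1 x y = c) →
        ∀ i j : Fin 4, HypImm (joinF (chi H0) (chi H1)) (g i) →
          HypImm (joinF (chi H0) (chi H1)) (g j) → i = j := by
  refine ⟨gfun, fcol0, fcol1, ?_, recIn_fcol0, recIn_fcol1, ?_, ?_, ?_⟩
  · -- each `gfun i` is hyperimmune
    intro i h hrec
    obtain ⟨oc, hoc⟩ := hrec
    have hc : ∀ n, (toCode oc).eval n = Part.some (h n) := fun n => by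
      rw [← oeval_zeroO_toCode]; exact hoc n
    set e := Encodable.encode (toCode oc) with he
    set k := 4*e + 4 + i.val with hk
    refine ⟨Blim k, ?_⟩
    have h1 : h (Blim k) < hlim (Blim k) :=
      hlim_dom (hc (Blim k)) (le_trans (by omega) (Blim_ge k))
    have h2 : Blim (k+1) ≤ Nat.nth (fun x => BIdx x % 4 ≠ i.val) (Blim k) :=
      nth_block_ge i (by have := i.isLt; omega)
    have h3 : Blim (k+1) = Blim k + hlim (Blim k) + 1 := rfl
    show h (Blim k) < gfun i (Blim k)
    unfold gfun
    omega
  · intro x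
    obtain ⟨s0, hs0⟩ := fcol0_limit x
    exact ⟨_, Filter.eventually_atTop.2 ⟨s0, hs0⟩⟩
  · intro x
    obtain ⟨s0, hs0⟩ := fcol1_limit x
    exact ⟨_, Filter.eventually_atTop.2 ⟨s0, hs0⟩⟩
  · intro H0 H1 h0inf h1inf hom0 hom1 i j hi hj
    obtain ⟨c0, hc0⟩ := hom0
    obtain ⟨c1, hc1⟩ := hom1
    have hL0 := limit_of_hom h0inf fcol0_limit hc0
    have hL1 := limit_of_hom h1inf fcol1_limit hc1
    have hrec0 := recIn_nthH0 H0 H1 h0inf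
    have hrec1 := recIn_nthH1 H0 H1 h1inf
    have key0 : ∀ v : Fin 4, (∀ x ∈ H0, BIdx x % 4 ≠ v.val) →
        i.val ≠ v.val ∧ j.val ≠ v.val := by
      intro v hv
      have hnk := kill h0inf v hv hrec0
      exact ⟨fun hval => hnk ((Fin.ext hval : i = v) ▸ hi),
        fun hval => hnk ((Fin.ext hval : j = v) ▸ hj)⟩
    have key1 : ∀ v : Fin 4, (∀ x ∈ H1, BIdx x % 4 ≠ v.val) →
        i.val ≠ v.val ∧ j.val ≠ v.val := by
      intro v hv
      have hnk := kill h1inf v hv hrec1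
      exact ⟨fun hval => hnk ((Fin.ext hval : i = v) ▸ hi),
        fun hval => hnk ((Fin.ext hval : j = v) ▸ hj)⟩
    have hi4 := i.isLt
    have hj4 := j.isLt
    fin_cases c0 <;> fin_cases c1
    · -- c0 = 0, c1 = 0 : H0 avoids parts 2,3 ; H1 avoids parts 1,3
      have hA : ∀ x ∈ H0, BIdx x % 4 ≤ 1 := by
        intro x hx
        have := hL0 x hx
        by_contra hcon
        rw [if_neg hcon] at this
        exact absurd this (by decide)
      have hB : ∀ x ∈ H1, BIdx x % 2 = 0 := by
        intro x hx
        have := hL1 x hx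
        by_contra hcon
        rw [if_neg hcon] at this
        exact absurd this (by decide)
      obtain ⟨hi2, hj2⟩ := key0 ⟨2, by omega⟩ (fun x hx => by have := hA x hx; simp; omega)
      obtain ⟨hi3, hj3⟩ := key0 ⟨3, by omega⟩ (fun x hx => by have := hA x hx; simp; omega)
      obtain ⟨hi1, hj1⟩ := key1 ⟨1, by omega⟩ (fun x hx => by have := hB x hx; simp; omega)
      exact Fin.ext (by simp at hi2 hi3 hi1 hj2 hj3 hj1; omega)
    · -- c0 = 0, c1 = 1 : H0 avoids parts 2,3 ; H1 avoids parts 0,2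
      have hA : ∀ x ∈ H0, BIdx x % 4 ≤ 1 := by
        intro x hx
        have := hL0 x hx
        by_contra hcon
        rw [if_neg hcon] at this
        exact absurd this (by decide)
      have hB : ∀ x ∈ H1, BIdx x % 2 ≠ 0 := by
        intro x hx
        have := hL1 x hx
        by_contra hcon
        rw [if_pos hcon] at this
        exact absurd this (by decide)
      obtain ⟨hi2, hj2⟩ := key0 ⟨2, by omega⟩ (fun x hx => by have := hA x hx; simp; omega)
      obtain ⟨hi3, hj3⟩ := key0 ⟨3, by omega⟩ (fun x hx => by have := hA x hx; simp; omega)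
      obtain ⟨hi0, hj0⟩ := key1 ⟨0, by omega⟩ (fun x hx => by have := hB x hx; simp; omega)
      exact Fin.ext (by simp at hi2 hi3 hi0 hj2 hj3 hj0; omega)
    · -- c0 = 1, c1 = 0 : H0 avoids parts 0,1 ; H1 avoids parts 1,3
      have hA : ∀ x ∈ H0, ¬ (BIdx x % 4 ≤ 1) := by
        intro x hx
        have := hL0 x hx
        by_contra hcon
        rw [if_pos hcon] at this
        exact absurd this (by decide)
      have hB : ∀ x ∈ H1, BIdx x % 2 = 0 := by
        intro x hx
        have := hL1 x hx
        by_contra hcon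
        rw [if_neg hcon] at this
        exact absurd this (by decide)
      obtain ⟨hi0, hj0⟩ := key0 ⟨0, by omega⟩ (fun x hx => by have := hA x hx; simp; omega)
      obtain ⟨hi1, hj1⟩ := key0 ⟨1, by omega⟩ (fun x hx => by have := hA x hx; simp; omega)
      obtain ⟨hi3, hj3⟩ := key1 ⟨3, by omega⟩ (fun x hx => by have := hB x hx; simp; omega)
      exact Fin.ext (by simp at hi0 hi1 hi3 hj0 hj1 hj3; omega)
    · -- c0 = 1, c1 = 1 : H0 avoids parts 0,1 ; H1 avoids parts 0,2
      have hA : ∀ x ∈ H0, ¬ (BIdx x % 4 ≤ 1) := by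
        intro x hx
        have := hL0 x hx
        by_contra hcon
        rw [if_pos hcon] at this
        exact absurd this (by decide)
      have hB : ∀ x ∈ H1, BIdx x % 2 ≠ 0 := by
        intro x hx
        have := hL1 x hx
        by_contra hcon
        rw [if_pos hcon] at this
        exact absurd this (by decide)
      obtain ⟨hi0, hj0⟩ := key0 ⟨0, by omega⟩ (fun x hx => by have := hA x hx; simp; omega)
      obtain ⟨hi1, hj1⟩ := key0 ⟨1, by omega⟩ (fun x hx => by have := hA x hx; simp; omega)
      obtain ⟨hi2, hj2⟩ := key1 ⟨2, by omega⟩ (fun x hx => by have := hB x hx; simp; omega)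
      exact Fin.ext (by simp at hi0 hi1 hi2 hj0 hj1 hj2; omega)

end Paper
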